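/- Let (p,λ) be a projection cycle-vector in [0,1]³ that maximizes Σλ_i f(x_i) / Σ|λ_i| over all projection cycle-vectors with points in a finite grid S = S_x × S_y × S_z (with {0,1} ⊂ S_x ∩ S_y ∩ S_z), where f is continuous on [0,1]³ and satisfies the strict conditions Δ_xΔ_y f > 0, Δ_xΔ_z f > 0, Δ_yΔ_z f > 0. Then any two points x_k, x_j of p with positive weights λ_k > 0, λ_j > 0 are well-ordered (coordinatewise comparable). -/

import Mathlib

open Set Finset

/-- Two points of `ℝ³` are well-ordered if one dominates the other coordinatewise. -/
def WellOrdered3 (a b : ℝ × ℝ × ℝ) : Prop :=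
  (a.1 ≤ b.1 ∧ a.2.1 ≤ b.2.1 ∧ a.2.2 ≤ b.2.2) ∨
  (b.1 ≤ a.1 ∧ b.2.1 ≤ a.2.1 ∧ b.2.2 ≤ a.2.2)

/-- All second mixed differences of `f` (with positive increments, inside the unit
cube) in any two distinct variables are strictly positive. -/
def StrictMixed (f : ℝ → ℝ → ℝ → ℝ) : Prop :=
  (∀ u u' v v' w, u ∈ Set.Icc (0:ℝ) 1 → u' ∈ Set.Icc (0:ℝ) 1 → v ∈ Set.Icc (0:ℝ) 1 →
    v' ∈ Set.Icc (0:ℝ) 1 → w ∈ Set.Icc (0:ℝ) 1 → u < u' → v < v' →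
    0 < f u' v' w - f u' v w - f u v' w + f u v w) ∧
  (∀ u u' w w' v, u ∈ Set.Icc (0:ℝ) 1 → u' ∈ Set.Icc (0:ℝ) 1 → w ∈ Set.Icc (0:ℝ) 1 →
    w' ∈ Set.Icc (0:ℝ) 1 → v ∈ Set.Icc (0:ℝ) 1 → u < u' → w < w' →
    0 < f u' v w' - f u' v w - f u v w' + f u v w) ∧
  (∀ v v' w w' u, v ∈ Set.Icc (0:ℝ) 1 → v' ∈ Set.Icc (0:ℝ) 1 → w ∈ Set.Icc (0:ℝ) 1 →
    w' ∈ Set.Icc (0:ℝ) 1 → u ∈ Set.Icc (0:ℝ) 1 → v < v' → w < w' →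
    0 < f u v' w' - f u v' w - f u v w' + f u v w)

/-- A projection cycle-vector in `ℝ³`: finitely many pairwise distinct points with
nonzero weights, the sums of the weights over every plane `x = ξ`, `y = ξ`, `z = ξ`
being zero. -/
def IsPCV (m : ℕ) (x : Fin m → ℝ × ℝ × ℝ) (lam : Fin m → ℝ) : Prop :=
  Function.Injective x ∧ (∀ i, lam i ≠ 0) ∧
  (∀ ξ : ℝ, ∑ i, (if (x i).1 = ξ then lam i else 0) = 0) ∧
  (∀ ξ : ℝ, ∑ i, (if (x i).2.1 = ξ then lam i else 0) = 0) ∧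
  (∀ ξ : ℝ, ∑ i, (if (x i).2.2 = ξ then lam i else 0) = 0)

/-- The normalized weighted sum `Σ λᵢ f(xᵢ) / Σ |λᵢ|`. -/
noncomputable def pcvRatio (m : ℕ) (x : Fin m → ℝ × ℝ × ℝ) (lam : Fin m → ℝ)
    (f : ℝ → ℝ → ℝ → ℝ) : ℝ :=
  (∑ i, lam i * f (x i).1 (x i).2.1 (x i).2.2) / (∑ i, |lam i|)

/-- All points lie in the grid `Sx × Sy × Sz`. -/
def PointsIn (m : ℕ) (x : Fin m → ℝ × ℝ × ℝ) (Sx Sy Sz : Finset ℝ) : Prop :=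
  ∀ i, (x i).1 ∈ Sx ∧ (x i).2.1 ∈ Sy ∧ (x i).2.2 ∈ Sz

/-- `(p,λ)` is an optimal projection cycle-vector for `f` on the grid `Sx × Sy × Sz`:
it maximizes `Σ λᵢ f(xᵢ)/Σ|λᵢ|` among all projection cycle-vectors with points in
the grid. -/
def OptimalPCV (Sx Sy Sz : Finset ℝ) (f : ℝ → ℝ → ℝ → ℝ)
    (m : ℕ) (x : Fin m → ℝ × ℝ × ℝ) (lam : Fin m → ℝ) : Prop :=
  IsPCV m x lam ∧ PointsIn m x Sx Sy Sz ∧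
  ∀ (m' : ℕ) (x' : Fin m' → ℝ × ℝ × ℝ) (lam' : Fin m' → ℝ),
    IsPCV m' x' lam' → PointsIn m' x' Sx Sy Sz →
    pcvRatio m' x' lam' f ≤ pcvRatio m x lam f

lemma supermod_aux (f : ℝ → ℝ → ℝ → ℝ) (hf : StrictMixed f)
    (a1 a2 a3 b1 b2 b3 : ℝ)
    (ha1 : a1 ∈ Set.Icc (0:ℝ) 1) (ha2 : a2 ∈ Set.Icc (0:ℝ) 1) (ha3 : a3 ∈ Set.Icc (0:ℝ) 1)
    (hb1 : b1 ∈ Set.Icc (0:ℝ) 1) (hb2 : b2 ∈ Set.Icc (0:ℝ) 1) (hb3 : b3 ∈ Set.Icc (0:ℝ) 1)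
    (h1 : a1 ≤ b1)
    (hna : ¬ (a1 ≤ b1 ∧ a2 ≤ b2 ∧ a3 ≤ b3))
    (hnb : ¬ (b1 ≤ a1 ∧ b2 ≤ a2 ∧ b3 ≤ a3)) :
    f a1 a2 a3 + f b1 b2 b3 <
      f (min a1 b1) (min a2 b2) (min a3 b3) + f (max a1 b1) (max a2 b2) (max a3 b3) := by
  obtain ⟨hxy, hxz, hyz⟩ := hf
  rw [min_eq_left h1, max_eq_right h1]
  push_neg at hna hnb
  rcases lt_trichotomy a2 b2 with h2 | h2 | h2
  · have h3 : b3 < a3 := by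
      rcases lt_or_ge b3 a3 with h | h
      · exact h
      · exact absurd h (by simpa using hna h1 h2.le)
    rw [min_eq_left h2.le, max_eq_right h2.le, min_eq_right h3.le, max_eq_left h3.le]
    rcases eq_or_lt_of_le h1 with h1e | h1l
    · subst h1e
      have := hyz a2 b2 b3 a3 a1 ha2 hb2 hb3 ha3 ha1 h2 h3
      linarith
    · have k1 := hxz a1 b1 b3 a3 b2 ha1 hb1 hb3 ha3 hb2 h1l h3
      have k2 := hyz a2 b2 b3 a3 a1 ha2 hb2 hb3 ha3 ha1 h2 h3
      linarith
  · subst h2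
    have h3 : b3 < a3 := by
      rcases lt_or_ge b3 a3 with h | h
      · exact h
      · exact absurd h (by simpa using hna h1 le_rfl)
    have h1l : a1 < b1 := by
      rcases eq_or_lt_of_le h1 with h | h
      · exact absurd (hnb h.ge le_rfl) (asymm h3)
      · exact h
    rw [min_self, max_self, min_eq_right h3.le, max_eq_left h3.le]
    have := hxz a1 b1 b3 a3 a2 ha1 hb1 hb3 ha3 ha2 h1l h3
    linarith
  · rw [min_eq_right h2.le, max_eq_left h2.le]
    rcases lt_trichotomy a3 b3 with h3 | h3 | h3
    · rw [min_eq_left h3.le, max_eq_right h3.le]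
      rcases eq_or_lt_of_le h1 with h1e | h1l
      · subst h1e
        have := hyz b2 a2 a3 b3 a1 hb2 ha2 ha3 hb3 ha1 h2 h3
        linarith
      · have k1 := hxy a1 b1 b2 a2 b3 ha1 hb1 hb2 ha2 hb3 h1l h2
        have k2 := hyz b2 a2 a3 b3 a1 hb2 ha2 ha3 hb3 ha1 h2 h3
        linarith
    · subst h3
      rw [min_self, max_self]
      have h1l : a1 < b1 := by
        rcases eq_or_lt_of_le h1 with h | h
        · exact absurd (hnb h.ge h2.le) (lt_irrefl a3)
        · exact h
      have := hxy a1 b1 b2 a2 a3 ha1 hb1 hb2 ha2 ha3 h1l h2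
      linarith
    · rw [min_eq_right h3.le, max_eq_left h3.le]
      have h1l : a1 < b1 := by
        rcases eq_or_lt_of_le h1 with h | h
        · exact absurd (hnb h.ge h2.le) (asymm h3)
        · exact h
      have k1 := hxy a1 b1 b2 a2 a3 ha1 hb1 hb2 ha2 ha3 h1l h2
      have k2 := hxz a1 b1 b3 a3 b2 ha1 hb1 hb3 ha3 hb2 h1l h3
      linarith

lemma supermod (f : ℝ → ℝ → ℝ → ℝ) (hf : StrictMixed f)
    (a1 a2 a3 b1 b2 b3 : ℝ)
    (ha1 : a1 ∈ Set.Icc (0:ℝ) 1) (ha2 : a2 ∈ Set.Icc (0:ℝ) 1) (ha3 : a3 ∈ Set.Icc (0:ℝ) 1)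
    (hb1 : b1 ∈ Set.Icc (0:ℝ) 1) (hb2 : b2 ∈ Set.Icc (0:ℝ) 1) (hb3 : b3 ∈ Set.Icc (0:ℝ) 1)
    (hna : ¬ (a1 ≤ b1 ∧ a2 ≤ b2 ∧ a3 ≤ b3))
    (hnb : ¬ (b1 ≤ a1 ∧ b2 ≤ a2 ∧ b3 ≤ a3)) :
    f a1 a2 a3 + f b1 b2 b3 <
      f (min a1 b1) (min a2 b2) (min a3 b3) + f (max a1 b1) (max a2 b2) (max a3 b3) := by
  rcases le_total a1 b1 with h | h
  · exact supermod_aux f hf a1 a2 a3 b1 b2 b3 ha1 ha2 ha3 hb1 hb2 hb3 h hna hnb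
  · have := supermod_aux f hf b1 b2 b3 a1 a2 a3 hb1 hb2 hb3 ha1 ha2 ha3 h hnb hna
    rw [min_comm b1, min_comm b2, min_comm b3, max_comm b1, max_comm b2, max_comm b3] at this
    linarith
lemma sum_fin_eq (T : Finset (ℝ × ℝ × ℝ)) (g : (ℝ × ℝ × ℝ) → ℝ) :
    ∑ i : Fin T.card, g ((T.equivFin.symm i) : ℝ × ℝ × ℝ) = ∑ p ∈ T, g p := by
  rw [← Finset.sum_coe_sort T g]
  exact Equiv.sum_comp T.equivFin.symm (fun t => g (t : ℝ × ℝ × ℝ))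

lemma toPCV (f : ℝ → ℝ → ℝ → ℝ) (T : Finset (ℝ × ℝ × ℝ)) (w : (ℝ × ℝ × ℝ) → ℝ)
    (hfib1 : ∀ ξ : ℝ, ∑ p ∈ T, (if p.1 = ξ then w p else 0) = 0)
    (hfib2 : ∀ ξ : ℝ, ∑ p ∈ T, (if p.2.1 = ξ then w p else 0) = 0)
    (hfib3 : ∀ ξ : ℝ, ∑ p ∈ T, (if p.2.2 = ξ then w p else 0) = 0) :
    ∃ (m' : ℕ) (x' : Fin m' → ℝ × ℝ × ℝ) (lam' : Fin m' → ℝ),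
      IsPCV m' x' lam' ∧ (∀ i, x' i ∈ T) ∧
      (∑ i, lam' i * f (x' i).1 (x' i).2.1 (x' i).2.2)
        = ∑ p ∈ T, w p * f p.1 p.2.1 p.2.2 ∧
      (∑ i, |lam' i|) = ∑ p ∈ T, |w p| := by
  classical
  set T' : Finset (ℝ × ℝ × ℝ) := T.filter (fun p => w p ≠ 0) with hT'
  have hsub : T' ⊆ T := Finset.filter_subset _ _
  refine ⟨T'.card, fun i => ((T'.equivFin.symm i) : ℝ × ℝ × ℝ),
    fun i => w ((T'.equivFin.symm i) : ℝ × ℝ × ℝ), ⟨?_, ?_, ?_, ?_, ?_⟩, ?_, ?_, ?_⟩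
  · exact Subtype.coe_injective.comp T'.equivFin.symm.injective
  · intro i
    have := (T'.equivFin.symm i).2
    exact (Finset.mem_filter.mp this).2
  · intro ξ
    rw [sum_fin_eq T' (fun p => if p.1 = ξ then w p else 0)]
    rw [Finset.sum_filter_of_ne (fun p _ h => by by_contra hw; simp [hw] at h)]
    exact hfib1 ξ
  · intro ξ
    rw [sum_fin_eq T' (fun p => if p.2.1 = ξ then w p else 0)]
    rw [Finset.sum_filter_of_ne (fun p _ h => by by_contra hw; simp [hw] at h)]
    exact hfib2 ξ
  · intro ξ
    rw [sum_fin_eq T' (fun p => if p.2.2 = ξ then w p else 0)]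
    rw [Finset.sum_filter_of_ne (fun p _ h => by by_contra hw; simp [hw] at h)]
    exact hfib3 ξ
  · intro i
    exact hsub (T'.equivFin.symm i).2
  · rw [sum_fin_eq T' (fun p => w p * f p.1 p.2.1 p.2.2)]
    exact Finset.sum_filter_of_ne (fun p _ h => by by_contra hw; simp [hw] at h)
  · rw [sum_fin_eq T' (fun p => |w p|)]
    exact Finset.sum_filter_of_ne (fun p _ h => by by_contra hw; simp [hw] at h)
lemma indicator4 (s t ξ : ℝ) :
    (if min s t = ξ then (1:ℝ) else 0) + (if max s t = ξ then 1 else 0)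
      - (if s = ξ then 1 else 0) - (if t = ξ then 1 else 0) = 0 := by
  rcases le_total s t with h | h
  · rw [min_eq_left h, max_eq_right h]; ring
  · rw [min_eq_right h, max_eq_left h]; ring

lemma sum_ind_mul (T : Finset (ℝ × ℝ × ℝ)) (q : ℝ × ℝ × ℝ) (hq : q ∈ T)
    (F : (ℝ × ℝ × ℝ) → ℝ) :
    ∑ p ∈ T, (if p = q then (1:ℝ) else 0) * F p = F q := by
  classical
  rw [Finset.sum_congr rfl (fun p _ => show (if p = q then (1:ℝ) else 0) * F p
    = if p = q then F q else 0 from by by_cases h : p = q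
                                       · subst h; simp
                                       · simp [h])]
  rw [Finset.sum_ite_eq' T q (fun _ => F q)]
  exact if_pos hq

lemma pcv_witness (f : ℝ → ℝ → ℝ → ℝ) (hf : StrictMixed f)
    (Sx Sy Sz : Finset ℝ)
    (h01 : ({0, 1} : Finset ℝ) ⊆ Sx ∩ Sy ∩ Sz) :
    ∃ (m' : ℕ) (x' : Fin m' → ℝ × ℝ × ℝ) (lam' : Fin m' → ℝ),
      IsPCV m' x' lam' ∧ PointsIn m' x' Sx Sy Sz ∧ 0 < pcvRatio m' x' lam' f := by
  classical
  have h0 : (0:ℝ) ∈ Sx ∩ Sy ∩ Sz := h01 (by simp)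
  have h1 : (1:ℝ) ∈ Sx ∩ Sy ∩ Sz := h01 (by simp)
  simp only [Finset.mem_inter] at h0 h1
  refine ⟨4, ![((0:ℝ),(0:ℝ),(0:ℝ)), (1,1,0), (1,0,0), (0,1,0)], ![1,1,-1,-1],
    ⟨?_, ?_, ?_, ?_, ?_⟩, ?_, ?_⟩
  · intro i j h
    fin_cases i <;> fin_cases j <;> simp_all [Prod.ext_iff] <;> norm_num at h
  · intro i; fin_cases i <;> norm_num
  · intro ξ
    simp only [Fin.sum_univ_four, Matrix.cons_val_zero, Matrix.cons_val_one, Matrix.cons_val_two,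
      Matrix.cons_val_three, Matrix.head_cons, Matrix.tail_cons]
    norm_num
    by_cases e0 : (0:ℝ) = ξ <;> by_cases e1 : (1:ℝ) = ξ <;> simp only [e0, e1, if_true, if_false] <;> norm_num <;> linarith
  · intro ξ
    simp only [Fin.sum_univ_four, Matrix.cons_val_zero, Matrix.cons_val_one, Matrix.cons_val_two,
      Matrix.cons_val_three, Matrix.head_cons, Matrix.tail_cons]
    norm_num
    by_cases e0 : (0:ℝ) = ξ <;> by_cases e1 : (1:ℝ) = ξ <;> simp only [e0, e1, if_true, if_false] <;> norm_num <;> linarith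
  · intro ξ
    simp only [Fin.sum_univ_four, Matrix.cons_val_zero, Matrix.cons_val_one, Matrix.cons_val_two,
      Matrix.cons_val_three, Matrix.head_cons, Matrix.tail_cons]
    norm_num
    by_cases e0 : (0:ℝ) = ξ <;> by_cases e1 : (1:ℝ) = ξ <;> simp only [e0, e1, if_true, if_false] <;> norm_num <;> linarith
  · intro i
    fin_cases i <;> simp_all
  · have key := hf.1 0 1 0 1 0 (by norm_num) (by norm_num) (by norm_num) (by norm_num)
      (by norm_num) one_pos one_pos
    unfold pcvRatio
    simp only [Fin.sum_univ_four, Matrix.cons_val_zero, Matrix.cons_val_one, Matrix.cons_val_two,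
      Matrix.cons_val_three, Matrix.head_cons, Matrix.tail_cons]
    norm_num
    linarith

theorem stmt_5 (f : ℝ → ℝ → ℝ → ℝ)
    (hcont : ContinuousOn (fun p : ℝ × ℝ × ℝ => f p.1 p.2.1 p.2.2)
      (Icc (0:ℝ) 1 ×ˢ Icc (0:ℝ) 1 ×ˢ Icc (0:ℝ) 1))
    (hf : StrictMixed f)
    (Sx Sy Sz : Finset ℝ)
    (hSx : (Sx : Set ℝ) ⊆ Icc (0:ℝ) 1) (hSy : (Sy : Set ℝ) ⊆ Icc (0:ℝ) 1)
    (hSz : (Sz : Set ℝ) ⊆ Icc (0:ℝ) 1)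
    (h01 : ({0, 1} : Finset ℝ) ⊆ Sx ∩ Sy ∩ Sz)
    (m : ℕ) (x : Fin m → ℝ × ℝ × ℝ) (lam : Fin m → ℝ)
    (hopt : OptimalPCV Sx Sy Sz f m x lam) :
    ∀ k j : Fin m, 0 < lam k → 0 < lam j → WellOrdered3 (x k) (x j) := by
  classical
  obtain ⟨⟨hinj, hlne, hfib1, hfib2, hfib3⟩, hpts, hmax⟩ := hopt
  intro k j hk hj
  by_contra hno
  unfold WellOrdered3 at hno
  rw [not_or] at hno
  obtain ⟨hna, hnb⟩ := hno
  set a := x k with ha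
  set b := x j with hb
  have haS := hpts k
  have hbS := hpts j
  have ha1 : a.1 ∈ Set.Icc (0:ℝ) 1 := hSx haS.1
  have ha2 : a.2.1 ∈ Set.Icc (0:ℝ) 1 := hSy haS.2.1
  have ha3 : a.2.2 ∈ Set.Icc (0:ℝ) 1 := hSz haS.2.2
  have hb1 : b.1 ∈ Set.Icc (0:ℝ) 1 := hSx hbS.1
  have hb2 : b.2.1 ∈ Set.Icc (0:ℝ) 1 := hSy hbS.2.1
  have hb3 : b.2.2 ∈ Set.Icc (0:ℝ) 1 := hSz hbS.2.2
  set c : ℝ × ℝ × ℝ := (min a.1 b.1, min a.2.1 b.2.1, min a.2.2 b.2.2) with hc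
  set d : ℝ × ℝ × ℝ := (max a.1 b.1, max a.2.1 b.2.1, max a.2.2 b.2.2) with hd
  have hc1 : c.1 = min a.1 b.1 := by rw [hc]
  have hc2 : c.2.1 = min a.2.1 b.2.1 := by rw [hc]
  have hc3 : c.2.2 = min a.2.2 b.2.2 := by rw [hc]
  have hd1 : d.1 = max a.1 b.1 := by rw [hd]
  have hd2 : d.2.1 = max a.2.1 b.2.1 := by rw [hd]
  have hd3 : d.2.2 = max a.2.2 b.2.2 := by rw [hd]
  have hsup : f a.1 a.2.1 a.2.2 + f b.1 b.2.1 b.2.2 <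
      f c.1 c.2.1 c.2.2 + f d.1 d.2.1 d.2.2 := by
    rw [hc1, hc2, hc3, hd1, hd2, hd3]
    exact supermod f hf _ _ _ _ _ _ ha1 ha2 ha3 hb1 hb2 hb3 hna hnb
  -- distinctness of a, b, c, d
  have hab : a ≠ b := fun h => hna (by rw [h]; exact ⟨le_rfl, le_rfl, le_rfl⟩)
  have hca : c ≠ a := by
    intro h
    exact hna ⟨min_eq_left_iff.mp (hc1 ▸ congrArg Prod.fst h),
      min_eq_left_iff.mp (hc2 ▸ congrArg (fun p : ℝ × ℝ × ℝ => p.2.1) h),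
      min_eq_left_iff.mp (hc3 ▸ congrArg (fun p : ℝ × ℝ × ℝ => p.2.2) h)⟩
  have hcb : c ≠ b := by
    intro h
    exact hnb ⟨min_eq_right_iff.mp (hc1 ▸ congrArg Prod.fst h),
      min_eq_right_iff.mp (hc2 ▸ congrArg (fun p : ℝ × ℝ × ℝ => p.2.1) h),
      min_eq_right_iff.mp (hc3 ▸ congrArg (fun p : ℝ × ℝ × ℝ => p.2.2) h)⟩
  have hda : d ≠ a := by
    intro h
    exact hnb ⟨max_eq_left_iff.mp (hd1 ▸ congrArg Prod.fst h),
      max_eq_left_iff.mp (hd2 ▸ congrArg (fun p : ℝ × ℝ × ℝ => p.2.1) h),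
      max_eq_left_iff.mp (hd3 ▸ congrArg (fun p : ℝ × ℝ × ℝ => p.2.2) h)⟩
  have hdb : d ≠ b := by
    intro h
    exact hna ⟨max_eq_right_iff.mp (hd1 ▸ congrArg Prod.fst h),
      max_eq_right_iff.mp (hd2 ▸ congrArg (fun p : ℝ × ℝ × ℝ => p.2.1) h),
      max_eq_right_iff.mp (hd3 ▸ congrArg (fun p : ℝ × ℝ × ℝ => p.2.2) h)⟩
  have minmax : ∀ s t : ℝ, min s t = max s t → s = t := by
    intro s t h
    have h1 := le_max_left s t
    have h2 := le_max_right s t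
    have h3 := min_le_left s t
    have h4 := min_le_right s t
    rw [← h] at h1 h2
    exact le_antisymm (h1.trans h4) (h2.trans h3)
  have hcd : c ≠ d := by
    intro h
    apply hab
    have e1 := minmax a.1 b.1 (by rw [← hc1, ← hd1, h])
    have e2 := minmax a.2.1 b.2.1 (by rw [← hc2, ← hd2, h])
    have e3 := minmax a.2.2 b.2.2 (by rw [← hc3, ← hd3, h])
    exact Prod.ext e1 (Prod.ext e2 e3)
  -- weight function of the original PCV
  set T0 := Finset.univ.image x with hT0
  set w0 : (ℝ × ℝ × ℝ) → ℝ := fun p => ∑ i, if x i = p then lam i else 0 with hw0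
  have hsum0 : ∀ g : (ℝ × ℝ × ℝ) → ℝ, ∑ p ∈ T0, g p = ∑ i, g (x i) := by
    intro g
    rw [hT0, Finset.sum_image (fun i _ j _ h => hinj h)]
  have hw0x : ∀ i, w0 (x i) = lam i := by
    intro i
    simp only [hw0, hinj.eq_iff]
    rw [Finset.sum_ite_eq' Finset.univ i lam]
    simp
  have hw0out : ∀ p, p ∉ T0 → w0 p = 0 := by
    intro p hp
    apply Finset.sum_eq_zero
    intro i _
    rw [if_neg]
    intro h
    exact hp (Finset.mem_image.mpr ⟨i, Finset.mem_univ i, h⟩)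
  set Num0 := ∑ i, lam i * f (x i).1 (x i).2.1 (x i).2.2 with hNum0def
  set Den0 := ∑ i, |lam i| with hDen0def
  have hDen0 : 0 < Den0 :=
    Finset.sum_pos' (fun i _ => abs_nonneg _)
      ⟨k, Finset.mem_univ k, abs_pos.mpr (hlne k)⟩
  have hR : pcvRatio m x lam f = Num0 / Den0 := rfl
  have hRpos : 0 < pcvRatio m x lam f := by
    obtain ⟨m', x', lam', hp, hq, hr⟩ := pcv_witness f hf Sx Sy Sz h01
    exact lt_of_lt_of_le hr (hmax m' x' lam' hp hq)
  have hNum0 : 0 < Num0 := by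
    have h2 : 0 < Num0 / Den0 := hR ▸ hRpos
    rcases div_pos_iff.mp h2 with h | h
    · exact h.1
    · linarith [h.2, hDen0]
  -- choice of ε
  have htpos : (0:ℝ) < min (lam k) (lam j) := lt_min hk hj
  have hinf : (Set.Ioo (0:ℝ) (min (lam k) (lam j))).Infinite := Set.Ioo_infinite htpos
  obtain ⟨ε, hεI, hεB⟩ := hinf.exists_notMem_finset ({-(w0 c), -(w0 d)} : Finset ℝ)
  obtain ⟨hε0, hεt⟩ := hεI
  have hεk : ε < lam k := lt_of_lt_of_le hεt (min_le_left _ _)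
  have hεj : ε < lam j := lt_of_lt_of_le hεt (min_le_right _ _)
  have hεc : w0 c + ε ≠ 0 := by
    intro h
    exact hεB (by rw [show ε = -(w0 c) by linarith]; simp)
  have hεd : w0 d + ε ≠ 0 := by
    intro h
    exact hεB (by rw [show ε = -(w0 d) by linarith]; simp)
  have hw0a : w0 a = lam k := by rw [ha, hw0x k]
  have hw0b : w0 b = lam j := by rw [hb, hw0x j]
  -- the perturbed weight function
  set δ : (ℝ × ℝ × ℝ) → ℝ := fun p =>
    (if p = c then (1:ℝ) else 0) + (if p = d then 1 else 0)
      - (if p = a then 1 else 0) - (if p = b then 1 else 0) with hδ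
  set w1 : (ℝ × ℝ × ℝ) → ℝ := fun p => w0 p + ε * δ p with hw1
  set T1 := insert c (insert d T0) with hT1
  have haT0 : a ∈ T0 := by rw [hT0]; exact Finset.mem_image.mpr ⟨k, Finset.mem_univ k, rfl⟩
  have hbT0 : b ∈ T0 := by rw [hT0]; exact Finset.mem_image.mpr ⟨j, Finset.mem_univ j, rfl⟩
  have hsubT : T0 ⊆ T1 := by
    rw [hT1]
    exact (Finset.subset_insert d T0).trans (Finset.subset_insert c (insert d T0))
  have haT1 : a ∈ T1 := hsubT haT0
  have hbT1 : b ∈ T1 := hsubT hbT0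
  have hcT1 : c ∈ T1 := by rw [hT1]; exact Finset.mem_insert_self c _
  have hdT1 : d ∈ T1 := by
    rw [hT1]; exact Finset.mem_insert.mpr (Or.inr (Finset.mem_insert_self d _))
  have hδa : δ a = -1 := by
    simp only [hδ]
    rw [if_neg (Ne.symm hca), if_neg (Ne.symm hda), if_neg hab]
    norm_num
  have hδb : δ b = -1 := by
    simp only [hδ]
    rw [if_neg (Ne.symm hcb), if_neg (Ne.symm hdb), if_neg (Ne.symm hab)]
    norm_num
  have hδc : δ c = 1 := by
    simp only [hδ]
    rw [if_neg hcd, if_neg hca, if_neg hcb]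
    norm_num
  have hδd : δ d = 1 := by
    simp only [hδ]
    rw [if_neg (Ne.symm hcd), if_neg hda, if_neg hdb]
    norm_num
  have hw1a : w1 a = lam k - ε := by
    simp only [hw1, hδa, hw0a]; ring
  have hw1b : w1 b = lam j - ε := by
    simp only [hw1, hδb, hw0b]; ring
  have hw1c : w1 c = w0 c + ε := by
    simp only [hw1, hδc]; ring
  have hw1d : w1 d = w0 d + ε := by
    simp only [hw1, hδd]; ring
  have hsub1 : ∀ g : (ℝ × ℝ × ℝ) → ℝ, (∀ p, p ∉ T0 → g p = 0) →
      ∑ p ∈ T1, g p = ∑ i, g (x i) := by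
    intro g hg
    rw [← Finset.sum_subset hsubT (fun p _ hp => hg p hp), hsum0]
  have hdelta : ∀ F : (ℝ × ℝ × ℝ) → ℝ,
      ∑ p ∈ T1, δ p * F p = F c + F d - F a - F b := by
    intro F
    simp only [hδ, sub_mul, add_mul]
    rw [Finset.sum_sub_distrib, Finset.sum_sub_distrib, Finset.sum_add_distrib]
    rw [sum_ind_mul T1 c hcT1 F, sum_ind_mul T1 d hdT1 F,
      sum_ind_mul T1 a haT1 F, sum_ind_mul T1 b hbT1 F]
  have hfibsplit : ∀ (h : (ℝ × ℝ × ℝ) → ℝ) (ξ : ℝ),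
      ∑ p ∈ T1, (if h p = ξ then w1 p else 0)
        = (∑ p ∈ T1, (if h p = ξ then w0 p else 0))
          + ε * ∑ p ∈ T1, δ p * (if h p = ξ then 1 else 0) := by
    intro h ξ
    rw [Finset.mul_sum, ← Finset.sum_add_distrib]
    apply Finset.sum_congr rfl
    intro p _
    simp only [hw1]
    split_ifs <;> ring
  have hfibw0 : ∀ (h : (ℝ × ℝ × ℝ) → ℝ) (ξ : ℝ),
      ∑ p ∈ T1, (if h p = ξ then w0 p else 0)
        = ∑ i, (if h (x i) = ξ then lam i else 0) := by
    intro h ξ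
    rw [hsub1 (fun p => if h p = ξ then w0 p else 0)
      (fun p hp => by simp [hw0out p hp])]
    exact Finset.sum_congr rfl fun i _ => by rw [hw0x]
  have hwfib1 : ∀ ξ : ℝ, ∑ p ∈ T1, (if p.1 = ξ then w1 p else 0) = 0 := by
    intro ξ
    rw [hfibsplit (fun p => p.1) ξ, hfibw0 (fun p => p.1) ξ, hfib1 ξ,
      hdelta (fun p => if p.1 = ξ then 1 else 0)]
    simp only [hc1, hd1]
    rw [indicator4 a.1 b.1 ξ]
    ring
  have hwfib2 : ∀ ξ : ℝ, ∑ p ∈ T1, (if p.2.1 = ξ then w1 p else 0) = 0 := by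
    intro ξ
    rw [hfibsplit (fun p => p.2.1) ξ, hfibw0 (fun p => p.2.1) ξ, hfib2 ξ,
      hdelta (fun p => if p.2.1 = ξ then 1 else 0)]
    simp only [hc2, hd2]
    rw [indicator4 a.2.1 b.2.1 ξ]
    ring
  have hwfib3 : ∀ ξ : ℝ, ∑ p ∈ T1, (if p.2.2 = ξ then w1 p else 0) = 0 := by
    intro ξ
    rw [hfibsplit (fun p => p.2.2) ξ, hfibw0 (fun p => p.2.2) ξ, hfib3 ξ,
      hdelta (fun p => if p.2.2 = ξ then 1 else 0)]
    simp only [hc3, hd3]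
    rw [indicator4 a.2.2 b.2.2 ξ]
    ring
  -- numerator of the perturbed configuration
  set N1 := ∑ p ∈ T1, w1 p * f p.1 p.2.1 p.2.2 with hN1def
  have hN1 : N1 = Num0 + ε * (f c.1 c.2.1 c.2.2 + f d.1 d.2.1 d.2.2
      - f a.1 a.2.1 a.2.2 - f b.1 b.2.1 b.2.2) := by
    have hsplit : N1 = (∑ p ∈ T1, w0 p * f p.1 p.2.1 p.2.2)
        + ε * ∑ p ∈ T1, δ p * f p.1 p.2.1 p.2.2 := by
      rw [hN1def, Finset.mul_sum, ← Finset.sum_add_distrib]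
      apply Finset.sum_congr rfl
      intro p _
      simp only [hw1]
      ring
    rw [hsplit, hsub1 (fun p => w0 p * f p.1 p.2.1 p.2.2)
      (fun p hp => by simp [hw0out p hp]),
      hdelta (fun p => f p.1 p.2.1 p.2.2)]
    have : ∑ i, w0 (x i) * f (x i).1 (x i).2.1 (x i).2.2 = Num0 :=
      Finset.sum_congr rfl fun i _ => by rw [hw0x]
    rw [this]
  -- denominator bound
  set D1 := ∑ p ∈ T1, |w1 p| with hD1def
  have hD1le : D1 ≤ Den0 := by
    have hbd : ∀ p ∈ T1, |w1 p| ≤ |w0 p| + ε * δ p := by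
      intro p _
      by_cases hpa : p = a
      · subst hpa
        rw [hw1a, hw0a, hδa, abs_of_pos hk,
          abs_of_pos (show (0:ℝ) < lam k - ε by linarith)]
        linarith
      · by_cases hpb : p = b
        · subst hpb
          rw [hw1b, hw0b, hδb, abs_of_pos hj,
            abs_of_pos (show (0:ℝ) < lam j - ε by linarith)]
          linarith
        · by_cases hpc : p = c
          · subst hpc
            rw [hw1c, hδc, mul_one]
            linarith [abs_add_le (w0 c) ε, abs_of_pos hε0]
          · by_cases hpd : p = d
            · subst hpd
              rw [hw1d, hδd, mul_one]
              linarith [abs_add_le (w0 d) ε, abs_of_pos hε0]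
            · have hδp : δ p = 0 := by
                simp only [hδ]
                rw [if_neg hpc, if_neg hpd, if_neg hpa, if_neg hpb]
                ring
              have hw1p : w1 p = w0 p := by simp only [hw1, hδp]; ring
              rw [hw1p, hδp]
              simp
    have hDen0' : (∑ p ∈ T1, |w0 p|) = Den0 := by
      rw [hsub1 (fun p => |w0 p|) (fun p hp => by simp [hw0out p hp])]
      exact Finset.sum_congr rfl fun i _ => by rw [hw0x]
    have hδ0 : ∑ p ∈ T1, δ p = 0 := by
      have h1 : ∑ p ∈ T1, δ p = ∑ p ∈ T1, δ p * 1 := by simp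
      rw [h1, hdelta (fun _ => 1)]
      ring
    calc D1 ≤ ∑ p ∈ T1, (|w0 p| + ε * δ p) := Finset.sum_le_sum hbd
      _ = (∑ p ∈ T1, |w0 p|) + ε * ∑ p ∈ T1, δ p := by
          rw [Finset.sum_add_distrib, Finset.mul_sum]
      _ = Den0 := by rw [hDen0', hδ0]; ring
  have hD1pos : 0 < D1 := by
    rw [hD1def]
    exact Finset.sum_pos' (fun p _ => abs_nonneg _)
      ⟨a, haT1, abs_pos.mpr (by rw [hw1a]; linarith)⟩
  -- the perturbed configuration as a PCV
  obtain ⟨m', x', lam', hpcv, hmem, hnum, hden⟩ := toPCV f T1 w1 hwfib1 hwfib2 hwfib3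
  have hmm : ∀ (S : Finset ℝ) (s t : ℝ), s ∈ S → t ∈ S → min s t ∈ S ∧ max s t ∈ S := by
    intro S s t hs ht
    constructor
    · rcases le_total s t with h | h
      · rw [min_eq_left h]; exact hs
      · rw [min_eq_right h]; exact ht
    · rcases le_total s t with h | h
      · rw [max_eq_right h]; exact ht
      · rw [max_eq_left h]; exact hs
  have hpts' : PointsIn m' x' Sx Sy Sz := by
    intro i
    have hx := hmem i
    rw [hT1] at hx
    rcases Finset.mem_insert.mp hx with h | hx'
    · rw [h, hc]
      exact ⟨(hmm Sx _ _ haS.1 hbS.1).1, (hmm Sy _ _ haS.2.1 hbS.2.1).1,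
        (hmm Sz _ _ haS.2.2 hbS.2.2).1⟩
    · rcases Finset.mem_insert.mp hx' with h | hx''
      · rw [h, hd]
        exact ⟨(hmm Sx _ _ haS.1 hbS.1).2, (hmm Sy _ _ haS.2.1 hbS.2.1).2,
          (hmm Sz _ _ haS.2.2 hbS.2.2).2⟩
      · rw [hT0] at hx''
        obtain ⟨i0, _, hi0⟩ := Finset.mem_image.mp hx''
        rw [← hi0]
        exact hpts i0
  have hratio' : pcvRatio m' x' lam' f = N1 / D1 := by
    unfold pcvRatio
    rw [hnum, hden]
  have hNlt : Num0 < N1 := by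
    rw [hN1]
    have : 0 < ε * (f c.1 c.2.1 c.2.2 + f d.1 d.2.1 d.2.2
        - f a.1 a.2.1 a.2.2 - f b.1 b.2.1 b.2.2) := mul_pos hε0 (by linarith)
    linarith
  have hlt : pcvRatio m x lam f < N1 / D1 := by
    rw [hR]
    have h1 : Num0 / Den0 < N1 / Den0 := by
      rw [div_lt_div_iff₀ hDen0 hDen0]
      exact mul_lt_mul_of_pos_right hNlt hDen0
    have h2 : N1 / Den0 ≤ N1 / D1 :=
      div_le_div_of_nonneg_left (le_of_lt (hNum0.trans hNlt)) hD1pos hD1le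
    linarith
  have := hmax m' x' lam' hpcv hpts'
  rw [hratio'] at this
  linarith
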